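/- For complex z, w avoiding poles, π⁻¹ · 2^{1−z−w} Γ(z) Γ(w) cos(π(w−z)/2) = (1/2) · [Γ(z/2)/Γ((1−z)/2)] · [Γ(w/2)/Γ((1−w)/2)] · (1 + tan(πz/2) tan(πw/2)). -/

import Mathlib

open Real Complex

/-- for `z, w ∈ ℂ` avoiding poles (so both sides are defined),
`π⁻¹ · 2^{1−z−w} Γ(z) Γ(w) cos(π(w−z)/2)
  = (1/2) · [Γ(z/2)/Γ((1−z)/2)] · [Γ(w/2)/Γ((1−w)/2)] · (1 + tan(πz/2) tan(πw/2))`. -/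
theorem stmt5 (z w : ℂ)
    (hz : ∀ n : ℕ, z ≠ -n) (hw : ∀ n : ℕ, w ≠ -n)
    (h1 : Complex.Gamma ((1 - z) / 2) ≠ 0) (h2 : Complex.Gamma ((1 - w) / 2) ≠ 0)
    (h3 : Complex.cos ((π : ℂ) * z / 2) ≠ 0) (h4 : Complex.cos ((π : ℂ) * w / 2) ≠ 0) :
    (π : ℂ)⁻¹ * (2 : ℂ) ^ ((1 : ℂ) - z - w) * Complex.Gamma z * Complex.Gamma w *
        Complex.cos ((π : ℂ) * (w - z) / 2) =
      (1 / 2) * (Complex.Gamma (z / 2) / Complex.Gamma ((1 - z) / 2)) *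
        (Complex.Gamma (w / 2) / Complex.Gamma ((1 - w) / 2)) *
        (1 + Complex.tan ((π : ℂ) * z / 2) * Complex.tan ((π : ℂ) * w / 2)) := by
  have hπ : (π : ℂ) ≠ 0 := by exact_mod_cast Real.pi_ne_zero
  have hS : ((Real.sqrt π : ℝ) : ℂ) * ((Real.sqrt π : ℝ) : ℂ) = (π : ℂ) := by
    rw [← Complex.ofReal_mul, Real.mul_self_sqrt Real.pi_pos.le]
  have h2ne : (2 : ℂ) ≠ 0 := two_ne_zero
  -- duplication for z and w
  have hdz : Complex.Gamma (z / 2) * Complex.Gamma ((z + 1) / 2) =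
      Complex.Gamma z * (2 : ℂ) ^ ((1 : ℂ) - z) * ((Real.sqrt π : ℝ) : ℂ) := by
    have := Complex.Gamma_mul_Gamma_add_half (z / 2)
    rw [show z / 2 + 1 / 2 = (z + 1) / 2 by ring, show (2 : ℂ) * (z / 2) = z by ring] at this
    exact this
  have hdw : Complex.Gamma (w / 2) * Complex.Gamma ((w + 1) / 2) =
      Complex.Gamma w * (2 : ℂ) ^ ((1 : ℂ) - w) * ((Real.sqrt π : ℝ) : ℂ) := by
    have := Complex.Gamma_mul_Gamma_add_half (w / 2)
    rw [show w / 2 + 1 / 2 = (w + 1) / 2 by ring, show (2 : ℂ) * (w / 2) = w by ring] at this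
    exact this
  -- reflection for (z+1)/2 and (w+1)/2
  have hsz : Complex.sin ((π : ℂ) * ((z + 1) / 2)) = Complex.cos ((π : ℂ) * z / 2) := by
    rw [show (π : ℂ) * ((z + 1) / 2) = (π : ℂ) * z / 2 + π / 2 by ring,
      Complex.sin_add_pi_div_two]
  have hrz : Complex.Gamma ((z + 1) / 2) * Complex.Gamma ((1 - z) / 2) *
      Complex.cos ((π : ℂ) * z / 2) = (π : ℂ) := by
    have := Complex.Gamma_mul_Gamma_one_sub ((z + 1) / 2)
    rw [show (1 : ℂ) - (z + 1) / 2 = (1 - z) / 2 by ring, hsz] at this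
    rw [this]
    field_simp
  have hsw : Complex.sin ((π : ℂ) * ((w + 1) / 2)) = Complex.cos ((π : ℂ) * w / 2) := by
    rw [show (π : ℂ) * ((w + 1) / 2) = (π : ℂ) * w / 2 + π / 2 by ring,
      Complex.sin_add_pi_div_two]
  have hrw : Complex.Gamma ((w + 1) / 2) * Complex.Gamma ((1 - w) / 2) *
      Complex.cos ((π : ℂ) * w / 2) = (π : ℂ) := by
    have := Complex.Gamma_mul_Gamma_one_sub ((w + 1) / 2)
    rw [show (1 : ℂ) - (w + 1) / 2 = (1 - w) / 2 by ring, hsw] at this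
    rw [this]
    field_simp
  have haz : Complex.Gamma ((z + 1) / 2) ≠ 0 := by
    intro h; rw [h] at hrz; simp at hrz; exact hπ hrz.symm
  have haw : Complex.Gamma ((w + 1) / 2) ≠ 0 := by
    intro h; rw [h] at hrw; simp at hrw; exact hπ hrw.symm
  -- power splitting
  have hpow : (2 : ℂ) ^ ((1 : ℂ) - z) * (2 : ℂ) ^ ((1 : ℂ) - w) =
      2 * (2 : ℂ) ^ ((1 : ℂ) - z - w) := by
    rw [← Complex.cpow_add _ _ h2ne,
      show (1 : ℂ) - z + (1 - w) = 1 + (1 - z - w) by ring,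
      Complex.cpow_add _ _ h2ne, Complex.cpow_one]
  have hbz : Complex.Gamma ((1 - z) / 2) =
      (π : ℂ) / (Complex.Gamma ((z + 1) / 2) * Complex.cos ((π : ℂ) * z / 2)) := by
    rw [eq_div_iff (mul_ne_zero haz h3)]
    linear_combination hrz
  have hbw : Complex.Gamma ((1 - w) / 2) =
      (π : ℂ) / (Complex.Gamma ((w + 1) / 2) * Complex.cos ((π : ℂ) * w / 2)) := by
    rw [eq_div_iff (mul_ne_zero haw h4)]
    linear_combination hrw
  rw [hbz, hbw, Complex.tan_eq_sin_div_cos, Complex.tan_eq_sin_div_cos,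
    show (π : ℂ) * (w - z) / 2 = (π : ℂ) * w / 2 - (π : ℂ) * z / 2 by ring,
    Complex.cos_sub]
  set X := Complex.cos ((π : ℂ) * z / 2) * Complex.cos ((π : ℂ) * w / 2) *
    (Complex.cos ((π : ℂ) * w / 2) * Complex.cos ((π : ℂ) * z / 2) +
      Complex.sin ((π : ℂ) * w / 2) * Complex.sin ((π : ℂ) * z / 2)) with hX
  field_simp
  linear_combination
    (-(Complex.cos ((π : ℂ) * w / 2) * Complex.cos ((π : ℂ) * z / 2) +
      Complex.sin ((π : ℂ) * w / 2) * Complex.sin ((π : ℂ) * z / 2))) *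
      (hdz * (Complex.Gamma (w / 2) * Complex.Gamma ((w + 1) / 2)) +
       hdw * (Complex.Gamma z * (2:ℂ)^((1:ℂ)-z) * ((Real.sqrt π : ℝ):ℂ)) +
       hpow * (Complex.Gamma z * Complex.Gamma w * ((Real.sqrt π : ℝ):ℂ) * ((Real.sqrt π : ℝ):ℂ)) +
       hS * (Complex.Gamma z * Complex.Gamma w * 2 * (2:ℂ)^((1:ℂ)-z-w)))
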